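/- Let d and n be positive integers and suppose f : Fin d × Fin 3 → EuclideanSpace ℝ (Fin n) is an injective map with ‖f(i, a)‖ = 1 for all (i, a), such that ⟨f(i, a), f(j, b)⟩ = 0 whenever i ≠ j. Then n ≥ 2d. (That is, embedding the complete d-partite graph with parts of size 3 as an orthogonality graph on a sphere requires at least 2d dimensions.) -/
import Mathlib
set_option maxHeartbeats 1000000

open scoped RealInnerProductSpace

lemma aux_pair {E : Type*} [NormedAddCommGroup E] [NormedSpace ℝ E] {x w : E}
    (hx : ‖x‖ = 1) (hw : ‖w‖ = 1) (h1 : w ≠ x) (h2 : w ≠ -x) {c0 c1 : ℝ}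
    (h : c0 • x + c1 • w = 0) : c0 = 0 ∧ c1 = 0 := by
  have hx0 : x ≠ 0 := by intro h0; rw [h0, norm_zero] at hx; norm_num at hx
  by_cases hc1 : c1 = 0
  · subst hc1
    simp only [zero_smul, add_zero] at h
    rcases smul_eq_zero.mp h with h0 | h0
    · exact ⟨h0, rfl⟩
    · exact absurd h0 hx0
  · exfalso
    have hw' : w = (-(c0 / c1)) • x := by
      have : c1 • w = -(c0 • x) := by linear_combination (norm := module) h
      calc w = c1⁻¹ • (c1 • w) := by rw [smul_smul, inv_mul_cancel₀ hc1, one_smul]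
        _ = (-(c0 / c1)) • x := by rw [this]; rw [smul_neg, smul_smul]; ring_nf; module
    have habs : |(-(c0 / c1))| = 1 := by
      have := hw
      rw [hw', norm_smul, hx, mul_one, Real.norm_eq_abs] at this
      exact this
    rcases abs_eq (by norm_num : (0:ℝ) ≤ 1) |>.mp habs with ht | ht
    · rw [ht, one_smul] at hw'; exact h1 hw'
    · rw [ht, neg_one_smul] at hw'; exact h2 hw'

theorem complete_multipartite_orthogonality_dimension (d n : ℕ) (hd : 0 < d) (hn : 0 < n)
    (f : Fin d × Fin 3 → EuclideanSpace ℝ (Fin n))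
    (hf : Function.Injective f)
    (hnorm : ∀ x : Fin d × Fin 3, ‖f x‖ = 1)
    (horth : ∀ (i j : Fin d) (a b : Fin 3), i ≠ j → ⟪f (i, a), f (j, b)⟫ = 0) :
    2 * d ≤ n := by
  classical
  -- choose two "good" vectors in each part
  let g : Fin d → Fin 2 → EuclideanSpace ℝ (Fin n) := fun i a =>
    if a = 0 then f (i, 0)
    else if f (i, 1) = -f (i, 0) then f (i, 2) else f (i, 1)
  have hgmem : ∀ i a, ∃ t : Fin 3, g i a = f (i, t) := by
    intro i a
    by_cases ha : a = 0
    · exact ⟨0, by simp [g, ha]⟩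
    · by_cases h1 : f (i, 1) = -f (i, 0)
      · exact ⟨2, by simp [g, ha, h1]⟩
      · exact ⟨1, by simp [g, ha, h1]⟩
  have hgnorm : ∀ i a, ‖g i a‖ = 1 := by
    intro i a; obtain ⟨t, ht⟩ := hgmem i a; rw [ht]; exact hnorm _
  have hg0 : ∀ i, g i 0 = f (i, 0) := fun i => by simp [g]
  have hgne : ∀ i, g i 1 ≠ f (i, 0) := by
    intro i
    by_cases h1 : f (i, 1) = -f (i, 0)
    · simp only [g, if_neg (by decide : (1 : Fin 2) ≠ 0), if_pos h1]
      intro h; have h2 := hf h; simp at h2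
    · simp only [g, if_neg (by decide : (1 : Fin 2) ≠ 0), if_neg h1]
      intro h; have h2 := hf h; simp at h2
  have hgneg : ∀ i, g i 1 ≠ -f (i, 0) := by
    intro i
    by_cases h1 : f (i, 1) = -f (i, 0)
    · simp only [g, if_neg (by decide : (1 : Fin 2) ≠ 0), if_pos h1]
      intro h
      have : f (i, 2) = f (i, 1) := by rw [h, h1]
      have h2 := hf this; simp at h2
    · simp only [g, if_neg (by decide : (1 : Fin 2) ≠ 0), if_neg h1]
      exact h1
  have hgorth : ∀ (i j : Fin d) (a b : Fin 2), i ≠ j → ⟪g i a, g j b⟫ = 0 := by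
    intro i j a b hij
    obtain ⟨t, ht⟩ := hgmem i a
    obtain ⟨s, hs⟩ := hgmem j b
    rw [ht, hs]; exact horth i j t s hij
  -- the combined family is linearly independent
  have hli : LinearIndependent ℝ (fun p : Fin d × Fin 2 => g p.1 p.2) := by
    rw [Fintype.linearIndependent_iff]
    intro c hc
    set s : Fin d → EuclideanSpace ℝ (Fin n) := fun i => ∑ a : Fin 2, c (i, a) • g i a with hs
    have htot : ∑ i : Fin d, s i = 0 := by
      rw [← hc, Fintype.sum_prod_type]
    have hcross : ∀ i j : Fin d, i ≠ j → ⟪s i, s j⟫ = 0 := by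
      intro i j hij
      simp only [hs, sum_inner, inner_sum, real_inner_smul_left, real_inner_smul_right]
      apply Finset.sum_eq_zero; intro a _
      apply Finset.sum_eq_zero; intro b _
      rw [hgorth i j b a hij]; ring
    have hszero : ∀ i, s i = 0 := by
      intro i
      have h0 : ⟪s i, ∑ j : Fin d, s j⟫ = 0 := by rw [htot, inner_zero_right]
      rw [inner_sum, Finset.sum_eq_single i (fun j _ hj => hcross i j (Ne.symm hj))
        (fun h => absurd (Finset.mem_univ i) h)] at h0
      exact inner_self_eq_zero.mp h0
    have key : ∀ i, c (i, 0) = 0 ∧ c (i, 1) = 0 := by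
      intro i
      have := hszero i
      rw [hs] at this
      simp only [Fin.sum_univ_two] at this
      rw [hg0 i] at this
      exact aux_pair (hnorm _) (hgnorm i 1) (hgne i) (hgneg i) this
    intro p
    obtain ⟨i, a⟩ := p
    fin_cases a
    · exact (key i).1
    · exact (key i).2
  have hcard := hli.fintype_card_le_finrank
  simpa [Fintype.card_prod, finrank_euclideanSpace_fin, mul_comm] using hcard
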